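/- Fix d ≥ 1 and for x ∈ ℝ^d define prog(x) = max{j ∈ {1,…,d} : x_j ≠ 0}, with prog(x) = 0 when x = 0. Let f : ℝ^d → ℝ be differentiable, let p ∈ (0,1], and let ξ be a Bernoulli(p) random variable with values in {0,1}. For x ∈ ℝ^d define the random vector ĝ(x,ξ) ∈ ℝ^d coordinatewise by ĝ(x,ξ)_j = ∂_j f(x)·(1 + 1[j > prog(x)]·(ξ/p − 1)). Suppose x ∈ ℝ^d satisfies the zero-chain condition prog(∇f(x)) ≤ prog(x) + 1. Then E_ξ[ĝ(x,ξ)] = ∇f(x) and E_ξ[‖ĝ(x,ξ) − ∇f(x)‖²] ≤ ‖∇f(x)‖_∞² · (1 − p)/p, where ‖·‖ is the Euclidean norm and ‖·‖_∞ is the supremum norm. -/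

import Mathlib

open MeasureTheory Finset

/-- `prog x` is the largest (1-based) index of a nonzero coordinate of `x`, and `0` if `x = 0`. -/
noncomputable def prog {d : ℕ} (x : EuclideanSpace ℝ (Fin d)) : ℕ :=
  Finset.univ.sup (fun j : Fin d => if x j ≠ 0 then (j : ℕ) + 1 else 0)

/-- The stochastic gradient estimator
`ĝ(x,ξ)_j = ∂_j f(x)·(1 + 1[j > prog(x)]·(ξ/p − 1))`. -/
noncomputable def ghat {d : ℕ} (f : EuclideanSpace ℝ (Fin d) → ℝ) (p : ℝ)
    (x : EuclideanSpace ℝ (Fin d)) (s : ℝ) : EuclideanSpace ℝ (Fin d) :=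
  WithLp.toLp 2 (fun j => gradient f x j * (1 + (if prog x < (j : ℕ) + 1 then (1 : ℝ) else 0) * (s / p - 1)))

theorem stmt5 {d : ℕ} (hd : 1 ≤ d)
    (f : EuclideanSpace ℝ (Fin d) → ℝ) (hf : Differentiable ℝ f)
    (p : ℝ) (hp0 : 0 < p) (hp1 : p ≤ 1)
    {Ω : Type*} [MeasurableSpace Ω] (P : Measure Ω) [IsProbabilityMeasure P]
    (ξ : Ω → ℝ) (hξmeas : Measurable ξ)
    (hξval : ∀ ω, ξ ω = 0 ∨ ξ ω = 1)
    (hξp : P {ω | ξ ω = 1} = ENNReal.ofReal p)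
    (x : EuclideanSpace ℝ (Fin d))
    (hzero_chain : prog (gradient f x) ≤ prog x + 1) :
    (∫ ω, ghat f p x (ξ ω) ∂P) = gradient f x ∧
    (∫ ω, ‖ghat f p x (ξ ω) - gradient f x‖^2 ∂P) ≤
      (⨆ j : Fin d, |gradient f x j|)^2 * (1 - p) / p := by
  set g : EuclideanSpace ℝ (Fin d) := gradient f x with hg
  -- key consequence of the zero-chain condition
  have hkey : ∀ j : Fin d, prog x < (j : ℕ) + 1 → (j : ℕ) ≠ prog x → g j = 0 := by
    intro j h1 h2
    by_contra h
    have hle : (if g j ≠ 0 then (j : ℕ) + 1 else 0) ≤ prog g :=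
      Finset.le_sup (f := fun j : Fin d => if g j ≠ 0 then (j : ℕ) + 1 else 0) (mem_univ j)
    rw [if_pos h] at hle
    omega
  set v : EuclideanSpace ℝ (Fin d) := WithLp.toLp 2 (fun j : Fin d => if (j : ℕ) = prog x then g j else 0) with hv
  have hrep : ∀ s : ℝ, ghat f p x s = g + (s / p - 1) • v := by
    intro s
    ext j
    show g j * (1 + (if prog x < (j : ℕ) + 1 then (1:ℝ) else 0) * (s / p - 1))
      = g j + (s / p - 1) * (if (j : ℕ) = prog x then g j else 0)
    by_cases h1 : prog x < (j : ℕ) + 1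
    · by_cases h2 : (j : ℕ) = prog x
      · simp [h1, h2]; ring
      · simp [h1, h2, hkey j h1 h2]
    · have h2 : (j : ℕ) ≠ prog x := by omega
      simp [h1, h2]
  -- integrability of ξ
  have hint : Integrable ξ P := by
    apply Integrable.mono' (integrable_const (1 : ℝ)) hξmeas.aestronglyMeasurable
    filter_upwards with ω
    rcases hξval ω with h | h <;> simp [h]
  -- E[ξ] = p
  have hEξ : (∫ ω, ξ ω ∂P) = p := by
    have : ξ = fun ω => Set.indicator {ω | ξ ω = 1} (fun _ => (1:ℝ)) ω := by
      funext ω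
      rcases hξval ω with h | h <;>
        simp [Set.indicator_apply, h, Set.mem_setOf_eq]
    have hms : MeasurableSet {ω | ξ ω = 1} := hξmeas (measurableSet_singleton 1)
    rw [this]
    simp only []
    rw [integral_indicator_const (1 : ℝ) hms]
    simp [Measure.real, hξp, ENNReal.toReal_ofReal hp0.le]
  have hpne : p ≠ 0 := hp0.ne'
  -- E[ξ/p - 1] = 0
  have hE1 : (∫ ω, (ξ ω / p - 1) ∂P) = 0 := by
    rw [integral_sub (hint.div_const p) (integrable_const 1), integral_div, hEξ,
      integral_const]
    simp [hpne]
  -- E[(ξ/p - 1)^2] = (1-p)/p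
  have hE2 : (∫ ω, (ξ ω / p - 1) ^ 2 ∂P) = (1 - p) / p := by
    have heq : ∀ ω, (ξ ω / p - 1) ^ 2 = ((1/p - 1)^2 - 1) * ξ ω + 1 := by
      intro ω
      rcases hξval ω with h | h <;> · rw [h]; ring
    simp_rw [heq]
    rw [integral_add ((hint.const_mul _)) (integrable_const 1), integral_const_mul, hEξ,
      integral_const]
    simp only [Measure.real, measure_univ, ENNReal.toReal_one]
    field_simp
    ring
  constructor
  · -- expectation
    simp_rw [hrep]
    have hi : Integrable (fun ω => (ξ ω / p - 1) • v) P :=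
      ((hint.div_const p).sub (integrable_const 1)).smul_const v
    rw [integral_add (integrable_const g) hi, integral_const, integral_smul_const, hE1]
    simp
  · -- variance bound
    have hnorm : ∀ ω, ‖ghat f p x (ξ ω) - g‖ ^ 2 = (ξ ω / p - 1) ^ 2 * ‖v‖ ^ 2 := by
      intro ω
      rw [hrep]
      have : g + (ξ ω / p - 1) • v - g = (ξ ω / p - 1) • v := by abel
      rw [this, norm_smul]
      simp [mul_pow, sq_abs]
    simp_rw [hnorm]
    rw [integral_mul_const, hE2]
    set S : ℝ := ⨆ j : Fin d, |g j| with hS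
    have hbdd : BddAbove (Set.range fun j : Fin d => |g j|) := Set.Finite.bddAbove
      (Set.finite_range _)
    have hS0 : 0 ≤ S := by
      haveI : Nonempty (Fin d) := ⟨⟨0, hd⟩⟩
      exact le_trans (abs_nonneg _) (le_ciSup hbdd (Classical.arbitrary (Fin d)))
    have hvS : ‖v‖ ^ 2 ≤ S ^ 2 := by
      rw [EuclideanSpace.norm_eq]
      rw [Real.sq_sqrt (Finset.sum_nonneg fun j _ => sq_nonneg _)]
      by_cases hlt : prog x < d
      · set j₀ : Fin d := ⟨prog x, hlt⟩ with hj₀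
        have : ∀ j : Fin d, ‖v j‖ ^ 2 = if j = j₀ then |g j| ^ 2 else 0 := by
          intro j
          show ‖(if (j : ℕ) = prog x then g j else 0)‖ ^ 2 = _
          by_cases h : j = j₀
          · subst h; simp [hj₀, sq_abs]
          · have : (j : ℕ) ≠ prog x := fun hc => h (Fin.ext hc)
            simp [this, h]
        simp_rw [this]
        rw [Finset.sum_ite_eq' univ j₀ (fun j => |g j| ^ 2)]
        simp only [mem_univ, if_pos]
        exact pow_le_pow_left₀ (abs_nonneg _) (le_ciSup hbdd j₀) 2
      · have : ∀ j : Fin d, ‖v j‖ ^ 2 = 0 := by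
          intro j
          have : (j : ℕ) ≠ prog x := by omega
          show ‖(if (j : ℕ) = prog x then g j else 0)‖ ^ 2 = 0
          simp [this]
        simp_rw [this]
        simp
        positivity
    have hq : 0 ≤ (1 - p) / p := div_nonneg (by linarith) hp0.le
    calc (1 - p) / p * ‖v‖ ^ 2 ≤ (1 - p) / p * S ^ 2 := by
          exact mul_le_mul_of_nonneg_left hvS hq
      _ = S ^ 2 * (1 - p) / p := by ring
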